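/- For all p ≥ 1 and n ≥ p+2, σ(K_{p,1,1}, n) ≥ 2·⌊((p+1)(n−1)+2)/2⌋, i.e., there exists a graphical sequence S of length n with sum σ(S) = 2·⌊((p+1)(n−1)+2)/2⌋ − 2 that is not potentially K_{p,1,1}-graphic. -/

import Mathlib

open SimpleGraph Finset

section Circ
variable {m : ℕ} [NeZero m]

/-- Circulant-type graph on `ZMod m` with difference set `D`. -/
def circG (D : Finset (ZMod m)) : SimpleGraph (ZMod m) where
  Adj x y := x ≠ y ∧ (x - y ∈ D ∨ y - x ∈ D)
  symm := ⟨fun x y ⟨h1, h2⟩ => ⟨h1.symm, h2.symm⟩⟩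
  loopless := ⟨fun x h => h.1 rfl⟩

instance circG_dec (D : Finset (ZMod m)) : DecidableRel (circG D).Adj :=
  fun x y => inferInstanceAs (Decidable (x ≠ y ∧ (x - y ∈ D ∨ y - x ∈ D)))

lemma circG_adj {D : Finset (ZMod m)} {x y : ZMod m} :
    (circG D).Adj x y ↔ x ≠ y ∧ (x - y ∈ D ∨ y - x ∈ D) := Iff.rfl

lemma circG_neighborFinset (D : Finset (ZMod m)) (hsym : ∀ d ∈ D, -d ∈ D)
    (h0 : (0 : ZMod m) ∉ D) (x : ZMod m) :
    (circG D).neighborFinset x = D.image (fun d => x - d) := by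
  ext y
  simp only [mem_neighborFinset, circG_adj, mem_image]
  constructor
  · rintro ⟨hne, h | h⟩
    · exact ⟨x - y, h, by ring⟩
    · exact ⟨-(y - x), hsym _ h, by ring⟩
  · rintro ⟨d, hd, rfl⟩
    have hdne : d ≠ 0 := fun h => h0 (h ▸ hd)
    constructor
    · intro h
      apply hdne
      have : x - (x - d) = 0 := by rw [← h]; ring
      linear_combination this
    · left; convert hd using 1; ring

lemma circG_degree (D : Finset (ZMod m)) (hsym : ∀ d ∈ D, -d ∈ D)
    (h0 : (0 : ZMod m) ∉ D) (x : ZMod m) :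
    (circG D).degree x = D.card := by
  rw [SimpleGraph.degree, circG_neighborFinset D hsym h0 x]
  exact Finset.card_image_of_injective _ (sub_right_injective)

end Circ

section MatchG
variable {m : ℕ} [NeZero m]

lemma val1m {m : ℕ} (h : 1 < m) : (1 : ZMod m).val = 1 := by
  rw [ZMod.val_one_eq_one_mod]; exact Nat.mod_eq_of_lt h

lemma val_add_one {x : ZMod m} (h : x.val + 1 < m) : (x + 1).val = x.val + 1 := by
  have h1 : (1 : ZMod m).val = 1 := val1m (by omega)
  rw [ZMod.val_add_of_lt (by omega)]
  omega

/-- matching graph on `ZMod m`: pairs `{2i, 2i+1}`. -/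
def matchG (m : ℕ) [NeZero m] : SimpleGraph (ZMod m) where
  Adj x y := (y = x + 1 ∧ x.val % 2 = 0 ∧ x.val + 1 < m) ∨
             (x = y + 1 ∧ y.val % 2 = 0 ∧ y.val + 1 < m)
  symm := ⟨fun x y h => h.symm⟩
  loopless := by
    constructor
    rintro x (⟨h1, _, h3⟩ | ⟨h1, _, h3⟩) <;>
    · have h2 := val_add_one h3
      rw [← h1] at h2
      omega

instance matchG_dec : DecidableRel (matchG m).Adj :=
  fun x y => inferInstanceAs (Decidable (_ ∨ _))

lemma matchG_neighborFinset_even_lt {x : ZMod m} (h2 : x.val % 2 = 0) (hlt : x.val + 1 < m) :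
    (matchG m).neighborFinset x = {x + 1} := by
  ext y
  simp only [mem_neighborFinset, mem_singleton]
  constructor
  · rintro (⟨h1, _⟩ | ⟨h1, hy2, hylt⟩)
    · exact h1
    · exfalso
      rw [h1, val_add_one hylt] at h2
      omega
  · intro h; exact Or.inl ⟨h, h2, hlt⟩

lemma matchG_neighborFinset_even_eq {x : ZMod m} (h2 : x.val % 2 = 0) (hlt : ¬ x.val + 1 < m) :
    (matchG m).neighborFinset x = ∅ := by
  ext y
  simp only [mem_neighborFinset, Finset.notMem_empty, iff_false]
  rintro (⟨_, _, h3⟩ | ⟨h1, hy2, hylt⟩)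
  · exact hlt h3
  · rw [h1, val_add_one hylt] at h2; omega

lemma matchG_neighborFinset_odd {x : ZMod m} (h2 : x.val % 2 = 1) :
    (matchG m).neighborFinset x = {((x.val - 1 : ℕ) : ZMod m)} := by
  have hxval : x.val < m := ZMod.val_lt x
  have hx1 : 1 ≤ x.val := by omega
  have hyval : ((x.val - 1 : ℕ) : ZMod m).val = x.val - 1 := ZMod.val_cast_of_lt (by omega)
  have hxy : x = ((x.val - 1 : ℕ) : ZMod m) + 1 := by
    apply ZMod.val_injective
    rw [val_add_one (by omega)]
    omega
  ext y
  simp only [mem_neighborFinset, mem_singleton]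
  constructor
  · rintro (⟨h1, hx2, _⟩ | ⟨h1, hy2, hylt⟩)
    · omega
    · -- x = y + 1 so y = x - 1
      have : y.val = x.val - 1 := by rw [h1, val_add_one hylt] at hxval ⊢; omega
      · apply ZMod.val_injective; rw [hyval, this]
  · rintro rfl
    exact Or.inr ⟨hxy, by omega, by omega⟩

lemma matchG_degree (x : ZMod m) :
    (matchG m).degree x = if x.val % 2 = 0 ∧ ¬ x.val + 1 < m then 0 else 1 := by
  rw [SimpleGraph.degree]
  rcases Nat.even_or_odd x.val with he | ho
  · have h2 : x.val % 2 = 0 := Nat.even_iff.mp he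
    by_cases hlt : x.val + 1 < m
    · rw [matchG_neighborFinset_even_lt h2 hlt]; simp [hlt]
    · rw [matchG_neighborFinset_even_eq h2 hlt]; simp [h2, hlt]
  · have h2 : x.val % 2 = 1 := Nat.odd_iff.mp ho
    rw [matchG_neighborFinset_odd h2]; simp [h2]

/-- membership in the matching neighborhood forces difference ±1 -/
lemma matchG_adj_diff {x y : ZMod m} (h : (matchG m).Adj x y) :
    x - y = 1 ∨ y - x = 1 := by
  rcases h with ⟨h1, _⟩ | ⟨h1, _⟩
  · right; rw [h1]; ring
  · left; rw [h1]; ring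

end MatchG

section Dset
variable {m : ℕ} [NeZero m]

def Dset (m a t : ℕ) [NeZero m] : Finset (ZMod m) :=
  ((Finset.Icc a t).image (fun j : ℕ => (j : ZMod m))) ∪
    ((Finset.Icc a t).image (fun j : ℕ => -(j : ZMod m)))

lemma Dset_sym {a t : ℕ} {d : ZMod m} (hd : d ∈ Dset m a t) : -d ∈ Dset m a t := by
  simp only [Dset, Finset.mem_union, Finset.mem_image] at hd ⊢
  rcases hd with ⟨j, hj, rfl⟩ | ⟨j, hj, rfl⟩
  · exact Or.inr ⟨j, hj, rfl⟩
  · exact Or.inl ⟨j, hj, by rw [neg_neg]⟩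

lemma Dset_val {a t : ℕ} (ha : 1 ≤ a) (ht : 2 * t < m) {d : ZMod m} (hd : d ∈ Dset m a t) :
    (a ≤ d.val ∧ d.val ≤ t) ∨ (m - t ≤ d.val ∧ d.val ≤ m - a) := by
  simp only [Dset, Finset.mem_union, Finset.mem_image, Finset.mem_Icc] at hd
  rcases hd with ⟨j, hj, rfl⟩ | ⟨j, hj, rfl⟩
  · left
    rw [ZMod.val_cast_of_lt (by omega)]
    omega
  · right
    have hv : ((j : ZMod m)).val = j := ZMod.val_cast_of_lt (by omega)
    have hzne : (j : ZMod m) ≠ 0 := by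
      intro h
      rw [h, ZMod.val_zero] at hv
      omega
    rw [ZMod.neg_val, if_neg hzne, hv]
    omega

lemma Dset_zero {a t : ℕ} (ha : 1 ≤ a) (ht : 2 * t < m) : (0 : ZMod m) ∉ Dset m a t := by
  intro h
  have := Dset_val ha ht h
  rw [ZMod.val_zero] at this
  omega

lemma Dset_card {a t : ℕ} (ha : 1 ≤ a) (ht : 2 * t < m) :
    (Dset m a t).card = 2 * (t + 1 - a) := by
  have hval : ∀ j ∈ Finset.Icc a t, ((j : ZMod m)).val = j := by
    intro j hj
    rw [Finset.mem_Icc] at hj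
    exact ZMod.val_cast_of_lt (by omega)
  have hnval : ∀ j ∈ Finset.Icc a t, ((-(j : ZMod m))).val = m - j := by
    intro j hj
    rw [Finset.mem_Icc] at hj
    have hv := hval j (by rw [Finset.mem_Icc]; omega)
    have hne : (j : ZMod m) ≠ 0 := by
      intro h; rw [h, ZMod.val_zero] at hv; omega
    rw [ZMod.neg_val, if_neg hne, hv]
  rw [Dset, Finset.card_union_of_disjoint, Finset.card_image_of_injOn,
    Finset.card_image_of_injOn, Nat.card_Icc]
  · omega
  · intro j1 h1 j2 h2 he
    rw [Finset.mem_coe] at h1 h2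
    have e1 := hnval j1 h1
    have e2 := hnval j2 h2
    have e3 : (-(j1 : ZMod m)).val = (-(j2 : ZMod m)).val := congrArg ZMod.val he
    rw [Finset.mem_Icc] at h1 h2
    omega
  · intro j1 h1 j2 h2 he
    rw [Finset.mem_coe] at h1 h2
    have e1 := hval j1 h1
    have e2 := hval j2 h2
    have e3 : ((j1 : ZMod m)).val = ((j2 : ZMod m)).val := congrArg ZMod.val he
    rw [Finset.mem_Icc] at h1 h2
    omega
  · rw [Finset.disjoint_left]
    rintro d hd1 hd2
    rw [Finset.mem_image] at hd1 hd2
    obtain ⟨j1, hj1, rfl⟩ := hd1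
    obtain ⟨j2, hj2, he⟩ := hd2
    have e1 := hval j1 hj1
    have e2 := hnval j2 hj2
    rw [Finset.mem_Icc] at hj1 hj2
    have : (-(j2 : ZMod m)).val = ((j1 : ZMod m)).val := by rw [he]
    omega

end Dset

section Apex
variable {α : Type*} [Fintype α] [DecidableEq α]

/-- join a new apex vertex to every vertex of `H`. -/
def apexG (H : SimpleGraph α) : SimpleGraph (Option α) where
  Adj a b := match a, b with
    | none, none => False
    | none, some _ => True
    | some _, none => True
    | some x, some y => H.Adj x y
  symm := by constructor; rintro (_|x) (_|y) h <;> simp_all <;> exact h.symm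
  loopless := by constructor; rintro (_|x) h <;> simp_all <;> exact H.loopless.irrefl x h

instance apexG_dec (H : SimpleGraph α) [DecidableRel H.Adj] : DecidableRel (apexG H).Adj := by
  rintro (_|x) (_|y)
  · exact inferInstanceAs (Decidable False)
  · exact inferInstanceAs (Decidable True)
  · exact inferInstanceAs (Decidable True)
  · exact inferInstanceAs (Decidable (H.Adj x y))

lemma apexG_degree_none (H : SimpleGraph α) [DecidableRel H.Adj] :
    (apexG H).degree none = Fintype.card α := by
  rw [SimpleGraph.degree]
  have : (apexG H).neighborFinset none = Finset.univ.image some := by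
    ext b
    rcases b with _|x <;> simp only [mem_neighborFinset] <;> simp [apexG]
  rw [this, Finset.card_image_of_injective _ (Option.some_injective α), Finset.card_univ]

lemma apexG_degree_some (H : SimpleGraph α) [DecidableRel H.Adj] (x : α) :
    (apexG H).degree (some x) = H.degree x + 1 := by
  rw [SimpleGraph.degree, SimpleGraph.degree]
  have : (apexG H).neighborFinset (some x) =
      insert none ((H.neighborFinset x).image some) := by
    ext b
    rcases b with _|y <;> simp only [mem_neighborFinset] <;> simp [apexG]
  rw [this, Finset.card_insert_of_notMem (by simp),
    Finset.card_image_of_injective _ (Option.some_injective α)]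

end Apex

section Transfer
variable {V W : Type*} [Fintype V] [Fintype W] [DecidableEq V] [DecidableEq W]

/-- transport a graph along an equivalence. -/
def transferG (e : V ≃ W) (G : SimpleGraph V) : SimpleGraph W where
  Adj a b := G.Adj (e.symm a) (e.symm b)
  symm := ⟨fun _ _ h => h.symm⟩
  loopless := ⟨fun _ h => G.loopless.irrefl _ h⟩

instance transferG_dec (e : V ≃ W) (G : SimpleGraph V) [DecidableRel G.Adj] :
    DecidableRel (transferG e G).Adj :=
  fun a b => inferInstanceAs (Decidable (G.Adj (e.symm a) (e.symm b)))

lemma transferG_degree (e : V ≃ W) (G : SimpleGraph V) [DecidableRel G.Adj] (a : W) :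
    (transferG e G).degree a = G.degree (e.symm a) := by
  rw [SimpleGraph.degree, SimpleGraph.degree]
  have : (transferG e G).neighborFinset a =
      (G.neighborFinset (e.symm a)).map e.toEmbedding := by
    ext b
    simp only [mem_neighborFinset, Finset.mem_map, Equiv.coe_toEmbedding]
    constructor
    · intro h; exact ⟨e.symm b, h, e.apply_symm_apply b⟩
    · rintro ⟨y, hy, rfl⟩
      show G.Adj (e.symm a) (e.symm (e y))
      rwa [e.symm_apply_apply]
  rw [this, Finset.card_map]

end Transfer

section Sup
variable {α : Type*} [Fintype α] [DecidableEq α]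

lemma sup_degree (G H : SimpleGraph α) [DecidableRel G.Adj] [DecidableRel H.Adj]
    (hdisj : ∀ x y, ¬ (G.Adj x y ∧ H.Adj x y)) (x : α) :
    (G ⊔ H).degree x = G.degree x + H.degree x := by
  rw [SimpleGraph.degree, SimpleGraph.degree, SimpleGraph.degree]
  have h1 : (G ⊔ H).neighborFinset x = G.neighborFinset x ∪ H.neighborFinset x := by
    ext y; simp [mem_neighborFinset]
  rw [h1, Finset.card_union_of_disjoint]
  rw [Finset.disjoint_left]
  intro y hy1 hy2
  rw [mem_neighborFinset] at hy1 hy2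
  exact hdisj x y ⟨hy1, hy2⟩

end Sup

lemma regular_construct (m k : ℕ) [NeZero m] (hk : k + 2 ≤ m) :
    ∃ (H : SimpleGraph (ZMod m)) (_ : DecidableRel H.Adj),
      (∀ x, H.degree x ≤ k) ∧ ∑ x : ZMod m, H.degree x = 2 * (k * m / 2) := by
  have hm2 : 2 ≤ m := by omega
  have hmul : (k-1)*m = k*m - m := by rw [Nat.sub_mul, one_mul]
  have hmle : k ≥ 1 → m ≤ k*m := fun h => Nat.le_mul_of_pos_left m (by omega)
  rcases Nat.even_or_odd k with hke | hko
  · -- k even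
    have hke2 : k % 2 = 0 := Nat.even_iff.mp hke
    have ht : 2 * (k/2) < m := by omega
    refine ⟨circG (Dset m 1 (k/2)), inferInstance, ?_, ?_⟩
    · intro x
      rw [circG_degree _ (fun d hd => Dset_sym hd) (Dset_zero le_rfl ht),
        Dset_card le_rfl ht]
      omega
    · have hdeg : ∀ x : ZMod m, (circG (Dset m 1 (k/2))).degree x = k := by
        intro x
        rw [circG_degree _ (fun d hd => Dset_sym hd) (Dset_zero le_rfl ht),
          Dset_card le_rfl ht]
        omega
      rw [Finset.sum_congr rfl (fun x _ => hdeg x), Finset.sum_const, Finset.card_univ,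
        ZMod.card, smul_eq_mul]
      have h2 : (k * m) % 2 = 0 := by
        have h := Nat.mul_mod k m 2
        rw [hke2, zero_mul] at h
        omega
      have hc : m * k = k * m := Nat.mul_comm m k
      omega
  · -- k odd
    have hko2 : k % 2 = 1 := Nat.odd_iff.mp hko
    set t := (k+1)/2 with htdef
    have ht : 2 * t < m := by omega
    have ha : (1:ℕ) ≤ 2 := one_le_two
    have hDcard : (Dset m 2 t).card = k - 1 := by rw [Dset_card ha ht]; omega
    have hDsym : ∀ d ∈ Dset m 2 t, -d ∈ Dset m 2 t := fun d hd => Dset_sym hd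
    have hD0 : (0 : ZMod m) ∉ Dset m 2 t := Dset_zero ha ht
    have hcdeg : ∀ x : ZMod m, (circG (Dset m 2 t)).degree x = k - 1 := by
      intro x; rw [circG_degree _ hDsym hD0, hDcard]
    -- neighbourhoods are disjoint
    have hdisj : ∀ x y : ZMod m, ¬ ((circG (Dset m 2 t)).Adj x y ∧ (matchG m).Adj x y) := by
      rintro x y ⟨hc, hm⟩
      have hdiff := matchG_adj_diff hm
      have h1v : (1 : ZMod m).val = 1 := val1m (by omega)
      have hn1v : (-1 : ZMod m).val = m - 1 := by
        rw [ZMod.neg_val, if_neg (by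
          intro h; rw [h, ZMod.val_zero] at h1v; omega), h1v]
      have key : ∀ d ∈ Dset m 2 t, d ≠ 1 ∧ d ≠ -1 := by
        intro d hd
        have hv := Dset_val ha ht hd
        constructor
        · rintro rfl; omega
        · rintro rfl; omega
      rcases hc with ⟨hne, hc | hc⟩ <;> rcases hdiff with h | h
      · exact (key _ hc).1 h
      · have : x - y = -1 := by rw [← h]; ring
        exact (key _ hc).2 this
      · have : y - x = -1 := by rw [← h]; ring
        exact (key _ hc).2 this
      · exact (key _ hc).1 h
    refine ⟨circG (Dset m 2 t) ⊔ matchG m, ?_, ?_, ?_⟩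
    · exact fun x y => inferInstanceAs (Decidable (_ ∨ _))
    · intro x
      rw [sup_degree _ _ hdisj, hcdeg, matchG_degree]
      split <;> omega
    · rw [Finset.sum_congr rfl (fun x _ => sup_degree _ _ hdisj x), Finset.sum_add_distrib,
        Finset.sum_congr rfl (fun x _ => hcdeg x), Finset.sum_const, Finset.card_univ,
        ZMod.card, smul_eq_mul]
      have hmatch : ∑ x : ZMod m, (matchG m).degree x = m - m % 2 := by
        rcases Nat.even_or_odd m with hme | hmo
        · have hme2 : m % 2 = 0 := Nat.even_iff.mp hme
          have : ∀ x : ZMod m, (matchG m).degree x = 1 := by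
            intro x
            rw [matchG_degree]
            have := ZMod.val_lt x
            split
            · omega
            · rfl
          rw [Finset.sum_congr rfl (fun x _ => this x), Finset.sum_const, Finset.card_univ,
            ZMod.card, smul_eq_mul]
          omega
        · have hmo2 : m % 2 = 1 := Nat.odd_iff.mp hmo
          set x0 : ZMod m := ((m - 1 : ℕ) : ZMod m) with hx0
          have hx0v : x0.val = m - 1 := ZMod.val_cast_of_lt (by omega)
          have hdeg : ∀ x : ZMod m, (matchG m).degree x = if x = x0 then 0 else 1 := by
            intro x
            rw [matchG_degree]
            have hxlt := ZMod.val_lt x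
            by_cases hx : x = x0
            · subst hx
              rw [if_pos (by omega), if_pos rfl]
            · have : x.val ≠ m - 1 := by
                intro h
                exact hx (ZMod.val_injective m (by rw [h, hx0v]))
              rw [if_neg (by omega), if_neg hx]
          rw [Finset.sum_congr rfl (fun x _ => hdeg x),
            ← Finset.add_sum_erase Finset.univ _ (Finset.mem_univ x0), if_pos rfl]
          have : ∀ x ∈ Finset.univ.erase x0, (if x = x0 then 0 else 1) = 1 := by
            intro x hx
            rw [if_neg (Finset.ne_of_mem_erase hx)]
          rw [Finset.sum_congr rfl this, Finset.sum_const, smul_eq_mul,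
            Finset.card_erase_of_mem (Finset.mem_univ x0), Finset.card_univ, ZMod.card]
          omega
      rw [hmatch]
      have hkm : (k * m) % 2 = m % 2 := by
        have h := Nat.mul_mod k m 2
        rw [hko2, one_mul] at h
        omega
      have e1 : m * (k - 1) + m = m * k := by
        rcases k with _ | k'
        · omega
        · rw [Nat.succ_sub_one, Nat.mul_succ]
      have hc : m * k = k * m := Nat.mul_comm m k
      have := hmle (by omega)
      omega

/-- The multiset of vertex degrees of a finite simple graph. -/
def degMS {m : ℕ} (G : SimpleGraph (Fin m)) [DecidableRel G.Adj] : Multiset ℕ :=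
  (Finset.univ : Finset (Fin m)).val.map fun v => G.degree v

/-- `G` contains `K_{p,1,1}` (complete tripartite with parts `p,1,1`) as a subgraph:
there are adjacent vertices `u, v` and `p` further vertices each adjacent to both. -/
def ContainsKp11 {V : Type*} (G : SimpleGraph V) (p : ℕ) : Prop :=
  ∃ u v : V, G.Adj u v ∧ ∃ s : Finset V, s.card = p ∧ u ∉ s ∧ v ∉ s ∧
    ∀ w ∈ s, G.Adj u w ∧ G.Adj v w

theorem stmt_8 (p n : ℕ) (hp : 1 ≤ p) (hn : p + 2 ≤ n) :
    ∃ S : Multiset ℕ, S.card = n ∧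
      (∃ (G : SimpleGraph (Fin n)) (_ : DecidableRel G.Adj), degMS G = S) ∧
      S.sum = 2 * (((p + 1) * (n - 1) + 2) / 2) - 2 ∧
      ¬ ∃ (G : SimpleGraph (Fin n)) (_ : DecidableRel G.Adj),
          degMS G = S ∧ ContainsKp11 G p := by
  set m := n - 1 with hm
  set k := p - 1 with hk
  haveI : NeZero m := ⟨by omega⟩
  have hkm : k + 2 ≤ m := by omega
  obtain ⟨H, instH, hHle, hHsum⟩ := regular_construct m k hkm
  letI := instH
  have hcard : Fintype.card (Option (ZMod m)) = n := by
    rw [Fintype.card_option, ZMod.card]; omega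
  let e : Option (ZMod m) ≃ Fin n := Fintype.equivFinOfCardEq hcard
  let Gm : SimpleGraph (Option (ZMod m)) := apexG H
  let Gfin : SimpleGraph (Fin n) := transferG e Gm
  letI instGfin : DecidableRel Gfin.Adj := transferG_dec e Gm
  -- degrees of Gfin
  have hdegfin : ∀ a : Fin n, Gfin.degree a = Gm.degree (e.symm a) := fun a =>
    transferG_degree e Gm a
  have hdeg_none : Gm.degree none = m := by
    rw [apexG_degree_none, ZMod.card]
  have hdeg_some : ∀ x : ZMod m, Gm.degree (some x) = H.degree x + 1 := fun x =>
    apexG_degree_some H x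
  refine ⟨degMS Gfin, ?_, ⟨Gfin, instGfin, rfl⟩, ?_, ?_⟩
  · rw [degMS, Multiset.card_map]
    exact Finset.card_univ.trans (Fintype.card_fin n)
  · -- the sum
    have hsum : (degMS Gfin).sum = ∑ a : Fin n, Gfin.degree a := rfl
    rw [hsum, Finset.sum_congr rfl (fun a _ => hdegfin a),
      Equiv.sum_comp e.symm (fun v => Gm.degree v), Fintype.sum_option, hdeg_none,
      Finset.sum_congr rfl (fun x _ => hdeg_some x), Finset.sum_add_distrib, hHsum,
      Finset.sum_const, Finset.card_univ, ZMod.card, smul_eq_mul, mul_one]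
    have hexp : (p + 1) * (n - 1) = k * m + 2 * m := by
      have : p + 1 = k + 2 := by omega
      rw [this, ← hm, add_mul]
    rw [hexp]
    omega
  · -- no realization contains K_{p,1,1}
    rintro ⟨G2, dec2, hdeg2, u, v, hadj, s, hscard, hus, hvs, hall⟩
    have hne : u ≠ v := hadj.ne
    have hu : p + 1 ≤ G2.degree u := by
      have hsub : insert v s ⊆ G2.neighborFinset u := by
        intro w hw
        rw [SimpleGraph.mem_neighborFinset]
        rcases Finset.mem_insert.mp hw with rfl | hw
        · exact hadj
        · exact (hall w hw).1
      calc p + 1 = (insert v s).card := by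
            rw [Finset.card_insert_of_notMem hvs, hscard]
        _ ≤ _ := Finset.card_le_card hsub
    have hv : p + 1 ≤ G2.degree v := by
      have hsub : insert u s ⊆ G2.neighborFinset v := by
        intro w hw
        rw [SimpleGraph.mem_neighborFinset]
        rcases Finset.mem_insert.mp hw with rfl | hw
        · exact hadj.symm
        · exact (hall w hw).2
      calc p + 1 = (insert u s).card := by
            rw [Finset.card_insert_of_notMem hus, hscard]
        _ ≤ _ := Finset.card_le_card hsub
    -- counting vertices of degree ≥ p+1
    have hcount2 : 2 ≤ Multiset.countP (fun d => p + 1 ≤ d) (degMS G2) := by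
      rw [degMS, Multiset.countP_map]
      have hsub : ({u, v} : Finset (Fin n)) ⊆
          Finset.univ.filter (fun a => p + 1 ≤ G2.degree a) := by
        intro w hw
        rw [Finset.mem_filter]
        rcases Finset.mem_insert.mp hw with rfl | hw
        · exact ⟨Finset.mem_univ _, hu⟩
        · rw [Finset.mem_singleton] at hw
          subst hw
          exact ⟨Finset.mem_univ _, hv⟩
      have h2 : 2 ≤ (Finset.univ.filter (fun a => p + 1 ≤ G2.degree a)).card := by
        calc 2 = ({u, v} : Finset (Fin n)).card := (Finset.card_pair hne).symm
          _ ≤ _ := Finset.card_le_card hsub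
      calc 2 ≤ (Finset.univ.filter (fun a => p + 1 ≤ G2.degree a)).card := h2
        _ = Multiset.card (Multiset.filter (fun a => p + 1 ≤ G2.degree a)
              (Finset.univ : Finset (Fin n)).val) := by
            rw [← Finset.filter_val]; rfl
    have hcount1 : Multiset.countP (fun d => p + 1 ≤ d) (degMS Gfin) ≤ 1 := by
      rw [degMS, Multiset.countP_map]
      have hsub : Finset.univ.filter (fun a : Fin n => p + 1 ≤ Gfin.degree a) ⊆ {e none} := by
        intro a ha
        rw [Finset.mem_filter] at ha
        rw [Finset.mem_singleton]
        obtain ⟨-, hdeg⟩ := ha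
        rw [hdegfin a] at hdeg
        rcases hsymm : e.symm a with _ | x
        · rw [← hsymm, Equiv.apply_symm_apply]
        · exfalso
          rw [hsymm, hdeg_some x] at hdeg
          have := hHle x
          omega
      have h1 : (Finset.univ.filter (fun a : Fin n => p + 1 ≤ Gfin.degree a)).card ≤ 1 := by
        calc _ ≤ ({e none} : Finset (Fin n)).card := Finset.card_le_card hsub
          _ = 1 := Finset.card_singleton _
      calc Multiset.card (Multiset.filter (fun a => p + 1 ≤ Gfin.degree a)
              (Finset.univ : Finset (Fin n)).val)
          = (Finset.univ.filter (fun a : Fin n => p + 1 ≤ Gfin.degree a)).card := by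
            rw [← Finset.filter_val]; rfl
        _ ≤ 1 := h1
    rw [hdeg2] at hcount2
    omega
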